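/- There exist a constant C > 0 and a threshold k₀ such that for every integer k ≥ k₀ the following holds: if Z is a binomial random variable with k−1 independent trials and success probability k^{−1/3}, then E[ ((k−1−Z)/(k−1)) · min(1, k^{2/3}/(Z+1)) ] ≥ 1 − C·k^{−1/3}. -/

import Mathlib

open Finset

lemma bsum0 (n : ℕ) (x y : ℝ) :
    ∑ s ∈ range (n+1), (n.choose s : ℝ) * x^s * y^(n-s) = (x+y)^n := by
  rw [add_pow]
  exact Finset.sum_congr rfl fun s _ => by ring

lemma bsum1 (n : ℕ) (x y : ℝ) :
    ∑ s ∈ range (n+1), (s:ℝ) * (n.choose s : ℝ) * x^s * y^(n-s)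
      = n * x * (x+y)^(n-1) := by
  cases n with
  | zero => simp
  | succ n =>
    rw [Finset.sum_range_succ']
    have key : ∀ i ∈ range (n+1),
        (((i+1 : ℕ)):ℝ) * ((n+1).choose (i+1) : ℝ) * x^(i+1) * y^(n+1-(i+1))
          = ((n:ℝ)+1) * x * ((n.choose i : ℝ) * x^i * y^(n-i)) := by
      intro i _
      have h2 : ((n:ℝ)+1) * (n.choose i : ℝ)
          = ((n+1).choose (i+1) : ℝ) * ((i:ℝ)+1) := by
        exact_mod_cast Nat.add_one_mul_choose_eq n i
      rw [Nat.succ_sub_succ]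
      push_cast
      linear_combination (-(x^(i+1) * y^(n-i))) * h2
    rw [Finset.sum_congr rfl key]
    rw [← Finset.mul_sum, bsum0]
    push_cast
    simp

lemma bsum2 (n : ℕ) (x y : ℝ) :
    ∑ s ∈ range (n+1), (s:ℝ) * ((s:ℝ)-1) * (n.choose s : ℝ) * x^s * y^(n-s)
      = n * ((n:ℝ)-1) * x^2 * (x+y)^(n-2) := by
  cases n with
  | zero => simp
  | succ n =>
    rw [Finset.sum_range_succ']
    have key : ∀ i ∈ range (n+1),
        (((i+1 : ℕ)):ℝ) * ((((i+1:ℕ)):ℝ)-1) * ((n+1).choose (i+1) : ℝ) * x^(i+1) * y^(n+1-(i+1))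
          = ((n:ℝ)+1) * x * ((i:ℝ) * (n.choose i : ℝ) * x^i * y^(n-i)) := by
      intro i _
      have h2 : ((n:ℝ)+1) * (n.choose i : ℝ)
          = ((n+1).choose (i+1) : ℝ) * ((i:ℝ)+1) := by
        exact_mod_cast Nat.add_one_mul_choose_eq n i
      rw [Nat.succ_sub_succ]
      push_cast
      linear_combination (-((i:ℝ) * x^(i+1) * y^(n-i))) * h2
    rw [Finset.sum_congr rfl key]
    rw [← Finset.mul_sum, bsum1]
    push_cast
    simp
    ring

lemma pointwise (nr m t s : ℝ) (hn : 1 ≤ nr) (hs0 : 0 ≤ s) (hs : s ≤ nr)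
    (hm : 0 < m) (ht : 0 < t) :
    1 - s/nr - (((s+1-m)^2/(2*t) + t/2)/m) ≤ ((nr - s)/nr) * min 1 (m/(s+1)) := by
  have hnr : (0:ℝ) < nr := lt_of_lt_of_le one_pos hn
  have hs1 : (0:ℝ) < s + 1 := by linarith
  set y : ℝ := ((s+1-m)^2/(2*t) + t/2)/m with hy_def
  have hy : 0 ≤ y := by positivity
  have hA0 : 0 ≤ (nr - s)/nr := div_nonneg (by linarith) hnr.le
  have hA1 : (nr - s)/nr ≤ 1 := by rw [div_le_one hnr]; linarith
  have hAeq : (nr - s)/nr = 1 - s/nr := by field_simp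
  have hB1 : min 1 (m/(s+1)) ≤ 1 := min_le_left _ _
  have hB0 : 0 ≤ min 1 (m/(s+1)) := le_min zero_le_one (by positivity)
  have hBy : 1 - y ≤ min 1 (m/(s+1)) := by
    rcases le_or_gt (s+1) m with h | h
    · have h1 : (1:ℝ) ≤ m/(s+1) := (one_le_div hs1).mpr h
      rw [min_eq_left h1]; linarith
    · have h1 : m/(s+1) ≤ 1 := by rw [div_le_one hs1]; linarith
      rw [min_eq_right h1, le_div_iff₀ hs1]
      have h5 : (s+1-m) - t/2 ≤ (s+1-m)^2/(2*t) := by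
        rw [le_div_iff₀ (by linarith : (0:ℝ) < 2*t)]
        nlinarith [sq_nonneg (s+1-m-t)]
      have h6 : (s+1-m)/m ≤ y := by
        rw [hy_def]
        exact (div_le_div_iff_of_pos_right hm).mpr (by linarith)
      have h7 : (1 - (s+1-m)/m) * (s+1) ≤ m := by
        rw [show 1 - (s+1-m)/m = (m - (s+1-m))/m by field_simp, div_mul_eq_mul_div,
          div_le_iff₀ hm]
        nlinarith [sq_nonneg (m - s - 1)]
      calc (1 - y)*(s+1) ≤ (1 - (s+1-m)/m)*(s+1) :=
            mul_le_mul_of_nonneg_right (by linarith) hs1.le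
        _ ≤ m := h7
  have hAB : (nr - s)/nr + min 1 (m/(s+1)) - 1 ≤ ((nr - s)/nr) * min 1 (m/(s+1)) := by
    nlinarith [mul_nonneg (sub_nonneg.2 hA1) (sub_nonneg.2 hB1)]
  have : 1 - s/nr = (nr - s)/nr := hAeq.symm
  linarith

set_option maxHeartbeats 1000000
/-- there are `C > 0` and a threshold `k₀` such that for all
`k ≥ k₀`, if `Z ~ Bin(k-1, k^{-1/3})` then
`E[((k-1-Z)/(k-1)) · min(1, k^{2/3}/(Z+1))] ≥ 1 - C·k^{-1/3}`.
The expectation is written out as a sum over the binomial distribution. -/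
theorem stmt_13 :
    ∃ C : ℝ, 0 < C ∧ ∃ k₀ : ℕ, ∀ k : ℕ, k₀ ≤ k →
      1 - C * (k : ℝ) ^ (-(1/3 : ℝ)) ≤
        ∑ s ∈ Finset.range k,
          ((k - 1).choose s : ℝ) * ((k : ℝ) ^ (-(1/3 : ℝ))) ^ s *
            (1 - (k : ℝ) ^ (-(1/3 : ℝ))) ^ (k - 1 - s) *
            ((((k : ℝ) - 1 - s) / ((k : ℝ) - 1)) *
              min 1 ((k : ℝ) ^ ((2 : ℝ)/3) / ((s : ℝ) + 1))) := by
  refine ⟨3, by norm_num, 2, fun k hk => ?_⟩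
  have hk2 : (2:ℝ) ≤ (k:ℝ) := by exact_mod_cast hk
  have hk0 : (0:ℝ) < (k:ℝ) := by linarith
  set p : ℝ := (k:ℝ) ^ (-(1/3:ℝ)) with hp_def
  have hp0 : 0 < p := Real.rpow_pos_of_pos hk0 _
  have hp1 : p ≤ 1 := Real.rpow_le_one_of_one_le_of_nonpos (by linarith) (by norm_num)
  have hp3 : (k:ℝ) * p^3 = 1 := by
    rw [hp_def, ← Real.rpow_natCast ((k:ℝ) ^ (-(1/3:ℝ))) 3, ← Real.rpow_mul hk0.le]
    norm_num
    rw [Real.rpow_neg_one]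
    field_simp
  have hmrw : (k:ℝ) ^ ((2:ℝ)/3) = (k:ℝ) * p := by
    rw [hp_def, show (2:ℝ)/3 = 1 + (-(1/3)) by norm_num, Real.rpow_add hk0, Real.rpow_one]
  rw [hmrw]
  set m : ℝ := (k:ℝ) * p with hm_def
  set t : ℝ := (k:ℝ) * p^2 with ht_def
  set nr : ℝ := (k:ℝ) - 1 with hnr_def
  set n : ℕ := k - 1 with hn_def
  have hkn : k = n + 1 := by omega
  have hnc : (n:ℝ) = nr := by
    rw [hn_def, hnr_def, Nat.cast_sub (by omega : 1 ≤ k)]; norm_num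
  rw [hkn]
  clear_value p m t nr n
  have hn1 : (1:ℝ) ≤ nr := by rw [hnr_def]; linarith
  have hm0 : 0 < m := by rw [hm_def]; positivity
  have ht0 : 0 < t := by rw [ht_def]; positivity
  have hq : (0:ℝ) ≤ 1 - p := by linarith
  have hxy : p + (1 - p) = 1 := by ring
  have hb0 := bsum0 n p (1-p); rw [hxy, one_pow] at hb0
  have hb1 := bsum1 n p (1-p); rw [hxy, one_pow] at hb1
  have hb2 := bsum2 n p (1-p); rw [hxy, one_pow] at hb2
  -- abbreviations
  have calc1 :
      ∑ s ∈ Finset.range (n+1), (n.choose s : ℝ) * p^s * (1-p)^(n-s) *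
          (1 - (s:ℝ)/nr - ((((s:ℝ)+1-m)^2/(2*t) + t/2)/m))
        ≤ ∑ s ∈ Finset.range (n+1), (n.choose s : ℝ) * p^s * (1-p)^(n-s) *
          ((nr - (s:ℝ))/nr * min 1 (m/((s:ℝ)+1))) := by
    refine Finset.sum_le_sum fun s hs => ?_
    have hW : (0:ℝ) ≤ (n.choose s : ℝ) * p^s * (1-p)^(n-s) :=
      mul_nonneg (mul_nonneg (by positivity) (by positivity)) (pow_nonneg hq _)
    have hsle : (s:ℝ) ≤ nr := by
      rw [← hnc]; exact_mod_cast Nat.lt_succ_iff.mp (Finset.mem_range.mp hs)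
    exact mul_le_mul_of_nonneg_left
      (pointwise nr m t (s:ℝ) hn1 (by positivity) hsle hm0 ht0) hW
  refine le_trans ?_ calc1
  -- exact value of the lower sum
  have expand : ∀ s ∈ Finset.range (n+1),
      (n.choose s : ℝ) * p^s * (1-p)^(n-s) *
          (1 - (s:ℝ)/nr - ((((s:ℝ)+1-m)^2/(2*t) + t/2)/m))
        = (1 - t/(2*m) - (1-m)^2/(2*t*m)) * ((n.choose s : ℝ) * p^s * (1-p)^(n-s))
          + (-(1/nr) - (3-2*m)/(2*t*m)) * ((s:ℝ) * (n.choose s : ℝ) * p^s * (1-p)^(n-s))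
          + (-(1/(2*t*m))) * ((s:ℝ) * ((s:ℝ)-1) * (n.choose s : ℝ) * p^s * (1-p)^(n-s)) := by
    intro s _; ring
  rw [Finset.sum_congr rfl expand, Finset.sum_add_distrib, Finset.sum_add_distrib,
    ← Finset.mul_sum, ← Finset.mul_sum, ← Finset.mul_sum, hb0, hb1, hb2, hnc]
  -- final numeric inequality
  have hnr0 : nr ≠ 0 := by linarith
  have ht2m : t/(2*m) = p/2 := by
    rw [ht_def, hm_def]; field_simp
  have h2tm : 2*t*m = 2*(k:ℝ) := by
    rw [ht_def, hm_def]; linear_combination 2*(k:ℝ)*hp3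
  have hVeq : (1 - t/(2*m) - (1-m)^2/(2*t*m)) * 1
          + (-(1/nr) - (3-2*m)/(2*t*m)) * (nr * p * 1)
          + (-(1/(2*t*m))) * (nr * (nr-1) * p^2 * 1)
        = 1 - p - t/(2*m)
          - ((1-m)^2 + (3-2*m)*(nr*p) + nr*(nr-1)*p^2)/(2*t*m) := by
    field_simp
    ring
  rw [hVeq, ht2m, h2tm]
  have hD' : (1-m)^2 + (3-2*m)*(nr*p) + nr*(nr-1)*p^2
      = nr*p*(1-p) + (1-p)^2 := by
    rw [hm_def, hnr_def]; ring
  rw [hD']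
  have hkp : 1 ≤ (k:ℝ)*p := by nlinarith
  have hD1 : nr*p*(1-p) + (1-p)^2 ≤ (k:ℝ)*p + 1 := by
    rw [hnr_def]; nlinarith
  have h8 : (nr*p*(1-p) + (1-p)^2)/(2*(k:ℝ)) ≤ ((k:ℝ)*p + 1)/(2*(k:ℝ)) :=
    (div_le_div_iff_of_pos_right (by linarith)).mpr hD1
  have h9 : ((k:ℝ)*p + 1)/(2*(k:ℝ)) ≤ p := by
    rw [div_le_iff₀ (by linarith : (0:ℝ) < 2*(k:ℝ))]; nlinarith
  linarith
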